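/- Let R be a commutative noetherian ring and A a Gorenstein R-algebra. Then R is a Gorenstein ring; that is, for every prime ideal p of R the local ring R_p has finite injective dimension as a module over itself. -/

import Mathlib

/-!
STATEMENT 0: If `A` is a Gorenstein `R`-algebra (a finite `R`-algebra, faithful and
projective as an `R`-module, such that every localisation `A_p = R_p ⊗[R] A` is
Iwanaga-Gorenstein), then `R` is a Gorenstein ring: for every prime ideal `p` of `R`,
the local ring `R_p` has finite injective dimension as a module over itself.
-/

open CategoryTheory TensorProduct

noncomputable section

/-- The Ext group `Ext^n_B(M, N)` in the category of left `B`-modules. -/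
def extGrp (B : Type) [Ring B] (M N : ModuleCat.{0} B) (n : ℕ) : ModuleCat ℤ :=
  ((Ext ℤ (ModuleCat.{0} B) n).obj (Opposite.op M)).obj N

/-- A `B`-module `N` has finite injective dimension:
`Ext^i_B(-, N)` vanishes for all `i` larger than some bound. -/
def HasFiniteInjDim (B : Type) [Ring B] (N : Type) [AddCommGroup N] [Module B N] : Prop :=
  ∃ d : ℕ, ∀ (M : ModuleCat.{0} B) (i : ℕ), d < i →
    Subsingleton (extGrp B M (ModuleCat.of B N) i)

/-- A ring `B` is Iwanaga-Gorenstein if it has finite injective dimension as a left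
module over itself and as a right module (= left `Bᵐᵒᵖ`-module) over itself. -/
def IsIwanagaGorenstein (B : Type) [Ring B] : Prop :=
  HasFiniteInjDim B B ∧ HasFiniteInjDim Bᵐᵒᵖ Bᵐᵒᵖ

/-- `A` is a Gorenstein `R`-algebra: faithful and projective as an `R`-module, and all
the localisations `A_p = R_p ⊗[R] A` at primes of `R` are Iwanaga-Gorenstein. -/
def IsGorensteinAlgebra (R : Type) [CommRing R] (A : Type) [Ring A] [Algebra R A] : Prop :=
  Module.Projective R A ∧ FaithfulSMul R A ∧
    ∀ (p : Ideal R) (hp : p.IsPrime),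
      haveI := hp
      IsIwanagaGorenstein (TensorProduct R (Localization.AtPrime p) A)

section Aux

variable (S : Type) [CommRing S] (B : Type) [Ring B] [Algebra S B]
variable (S : Type) [CommRing S] (B : Type) [Ring B] [Algebra S B]

def tensF : ModuleCat.{0} S ⥤ ModuleCat.{0} B where
  obj M := ModuleCat.of B (B ⊗[S] M)
  map f := ModuleCat.ofHom (AlgebraTensorModule.map (LinearMap.id : B →ₗ[B] B) f.hom)
  map_id M := by
    refine ModuleCat.hom_ext (LinearMap.ext fun x => ?_)
    induction x using TensorProduct.induction_on with
    | zero => simp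
    | tmul => rfl
    | add a b ha hb => simp_all
  map_comp f g := by
    refine ModuleCat.hom_ext (LinearMap.ext fun x => ?_)
    induction x using TensorProduct.induction_on with
    | zero => simp
    | tmul => rfl
    | add a b ha hb => simp_all

instance : (tensF S B).Additive where
  map_add {X Y f g} := by
    refine ModuleCat.hom_ext (LinearMap.ext fun x => ?_)
    induction x using TensorProduct.induction_on with
    | zero => exact (map_zero _).trans (map_zero _).symm
    | tmul a m => show a ⊗ₜ[S] ((f.hom+g.hom) m) = a ⊗ₜ[S] (f.hom m) + a ⊗ₜ[S] (g.hom m); rw [LinearMap.add_apply, tmul_add]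
    | add a b ha hb => exact (map_add _ a b).trans ((congrArg₂ (· + ·) ha hb).trans (map_add _ a b).symm)

lemma tensF_map_apply {X Y : ModuleCat.{0} S} (f : X ⟶ Y) (b : B) (x : X) :
    (tensF S B).map f (b ⊗ₜ x) = b ⊗ₜ f x := rfl

example {X Y : ModuleCat.{0} S} (f : X ⟶ Y) :
    ⇑(AlgebraTensorModule.map (LinearMap.id : B →ₗ[B] B) f.hom) = ⇑(LinearMap.lTensor B f.hom) := rfl

lemma tensF_exact [Module.Flat S B] (Sc : ShortComplex (ModuleCat.{0} S)) (hSc : Sc.Exact) :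
    (Sc.map (tensF S B)).Exact := by
  rw [ShortComplex.moduleCat_exact_iff] at hSc ⊢
  intro x hx
  have hfe : Function.Exact (LinearMap.lTensor B Sc.f.hom) (LinearMap.lTensor B Sc.g.hom) := by
    apply Module.Flat.lTensor_exact
    rw [LinearMap.exact_iff]
    ext y
    constructor
    · intro hy
      exact (hSc y hy).imp fun x₁ h => h
    · rintro ⟨x₁, rfl⟩
      exact Sc.moduleCat_zero_apply x₁
  obtain ⟨y, hy⟩ := (hfe x).1 hx
  exact ⟨y, hy⟩

instance [Module.Flat S B] : (tensF S B).PreservesHomology :=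
  ((Functor.exact_tfae (tensF S B)).out 1 2).1 (tensF_exact S B)

variable [Module.Projective S B]

def mapRes {M : ModuleCat.{0} S} (P : CategoryTheory.ProjectiveResolution M) :
    CategoryTheory.ProjectiveResolution ((tensF S B).obj M) where
  complex := ((tensF S B).mapHomologicalComplex _).obj P.complex
  projective n := by
    haveI h1 : Module.Projective S (P.complex.X n) :=
      (IsProjective.iff_projective (R := S) (P := P.complex.X n)).mpr (P.projective n)
    exact (IsProjective.iff_projective (R := B) (P := B ⊗[S] (P.complex.X n))).mp inferInstance
  π := ((tensF S B).mapHomologicalComplex _).map P.π ≫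
    ((HomologicalComplex.singleMapHomologicalComplex (tensF S B) _ 0).hom.app M)
  quasiIso := inferInstance

def homEquivBS (X : Type) [AddCommGroup X] [Module S X] :
    ((B ⊗[S] X) →ₗ[B] B) ≃+ (X →ₗ[S] B) where
  toFun φ := ((φ.restrictScalars S).comp ((TensorProduct.mk S B X) 1))
  invFun ψ := AlgebraTensorModule.lift (LinearMap.toSpanSingleton B (X →ₗ[S] B) ψ)
  left_inv φ := by
    apply LinearMap.ext
    intro x
    induction x using TensorProduct.induction_on with
    | zero => simp
    | tmul b x =>
      simp only [AlgebraTensorModule.lift_apply]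
      show (b • ((φ.restrictScalars S).comp ((TensorProduct.mk S B X) 1))) x = φ (b ⊗ₜ x)
      show b • φ (1 ⊗ₜ x) = φ (b ⊗ₜ x)
      rw [← φ.map_smul]
      congr 1
      show b • ((1:B) ⊗ₜ[S] x) = b ⊗ₜ x
      rw [TensorProduct.smul_tmul', smul_eq_mul, mul_one]
    | add a b ha hb => simp_all
  right_inv ψ := by
    apply LinearMap.ext
    intro x
    show (AlgebraTensorModule.lift (LinearMap.toSpanSingleton B (X →ₗ[S] B) ψ)) ((1:B) ⊗ₜ x) = ψ x
    simp
  map_add' φ₁ φ₂ := rfl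

open CategoryTheory in
def homComplexIso {M : ModuleCat.{0} S} (P : CategoryTheory.ProjectiveResolution M) :
    (ChainComplex.linearYonedaObj
        (((tensF S B).mapHomologicalComplex _).obj P.complex) ℤ (ModuleCat.of B B)) ≅
      P.complex.linearYonedaObj ℤ (ModuleCat.of S B) :=
  HomologicalComplex.Hom.isoOfComponents
    (fun n => (((ModuleCat.homAddEquiv (M := (tensF S B).obj (P.complex.X n)) (N := ModuleCat.of B B)).trans
      ((homEquivBS S B (P.complex.X n)).trans
      (ModuleCat.homAddEquiv (M := P.complex.X n) (N := ModuleCat.of S B)).symm)).toIntLinearEquiv).toModuleIso)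
    (fun i j _ => by
      apply ModuleCat.hom_ext
      apply LinearMap.ext
      intro φ
      rfl)

lemma subsingleton_of_moduleCat_iso {X Y : ModuleCat ℤ} (e : X ≅ Y) (h : Subsingleton Y) :
    Subsingleton X := by
  constructor
  intro a b
  have h2 : e.inv (e.hom a) = e.inv (e.hom b) := congrArg e.inv (Subsingleton.elim _ _)
  have ha : e.inv (e.hom a) = a := e.hom_inv_id_apply a
  have hb : e.inv (e.hom b) = b := e.hom_inv_id_apply b
  rw [ha, hb] at h2
  exact h2

def extIsoChange {M : ModuleCat.{0} S} (n : ℕ) (P : CategoryTheory.ProjectiveResolution M) :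
    (((Ext ℤ (ModuleCat.{0} S) n).obj (Opposite.op M)).obj (ModuleCat.of S B)) ≅
      (((Ext ℤ (ModuleCat.{0} B) n).obj (Opposite.op ((tensF S B).obj M))).obj
        (ModuleCat.of B B)) :=
  (P.isoExt n (ModuleCat.of S B)) ≪≫
    ((HomologicalComplex.homologyFunctor (ModuleCat ℤ) _ n).mapIso
      (homComplexIso S B P)).symm ≪≫
    ((mapRes S B P).isoExt n (ModuleCat.of B B)).symm

lemma ext_retract {Bb : Type} [Ring Bb] {M N N' : ModuleCat.{0} Bb} (i : N ⟶ N') (r : N' ⟶ N)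
    (hir : i ≫ r = 𝟙 N) (n : ℕ)
    (h : Subsingleton (((Ext ℤ (ModuleCat.{0} Bb) n).obj (Opposite.op M)).obj N')) :
    Subsingleton (((Ext ℤ (ModuleCat.{0} Bb) n).obj (Opposite.op M)).obj N) := by
  set F := (Ext ℤ (ModuleCat.{0} Bb) n).obj (Opposite.op M) with hF
  constructor
  intro a b
  have hid : F.map i ≫ F.map r = 𝟙 _ := by rw [← F.map_comp, hir, F.map_id]
  have ha : (F.map r) ((F.map i) a) = a := congrFun (congrArg (fun (f : F.obj N ⟶ F.obj N) => (f : F.obj N → F.obj N)) hid) a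
  have hb : (F.map r) ((F.map i) b) = b := congrFun (congrArg (fun (f : F.obj N ⟶ F.obj N) => (f : F.obj N → F.obj N)) hid) b
  rw [← ha, ← hb, Subsingleton.elim ((F.map i) a) ((F.map i) b)]

lemma exists_retract [IsLocalRing S] [Module.Finite S B] [Nontrivial B] :
    ∃ (i : S →ₗ[S] B) (r : B →ₗ[S] S), r.comp i = LinearMap.id := by
  haveI : Module.FinitePresentation S B := Module.finitePresentation_of_projective S B
  haveI : Module.Free S B := Module.free_of_flat_of_isLocalRing
  let b := Module.Free.chooseBasis S B
  haveI : Nonempty (Module.Free.ChooseBasisIndex S B) := b.index_nonempty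
  obtain ⟨i₀⟩ := ‹Nonempty (Module.Free.ChooseBasisIndex S B)›
  refine ⟨LinearMap.toSpanSingleton S B (b i₀), b.coord i₀, ?_⟩
  apply LinearMap.ext
  intro s
  simp [LinearMap.toSpanSingleton_apply]

lemma nontrivial_tensor (R : Type) [CommRing R] (S' : Type) [CommRing S'] [Algebra R S']
    [Module.Flat R S'] [Nontrivial S'] (A : Type) [Ring A] [Algebra R A] [FaithfulSMul R A] :
    Nontrivial (S' ⊗[R] A) := by
  have hinj : Function.Injective (algebraMap R A) := fun r r' h => by
    refine @FaithfulSMul.eq_of_smul_eq_smul R A _ _ r r' (fun a => ?_)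
    rw [Algebra.smul_def, Algebra.smul_def, h]
  have h1 : Function.Injective ((Algebra.linearMap R A).lTensor S') :=
    Module.Flat.lTensor_preserves_injective_linearMap _ hinj
  refine ⟨⟨(1:S') ⊗ₜ (1:A), 0, fun h0 => ?_⟩⟩
  have heq : ((Algebra.linearMap R A).lTensor S') ((1:S') ⊗ₜ (1:R)) = (1:S') ⊗ₜ (1:A) := by
    simp
  have h2 : ((1:S') ⊗ₜ[R] (1:R)) = (0 : S' ⊗[R] R) := h1 (by rw [heq, h0, map_zero])
  have h3 := congrArg (TensorProduct.rid R S') h2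
  simp at h3

end Aux

theorem gorenstein_base_ring_of_gorensteinAlgebra
    (R : Type) [CommRing R] [IsNoetherianRing R]
    (A : Type) [Ring A] [Algebra R A] [Module.Finite R A]
    (hGor : IsGorensteinAlgebra R A) :
    ∀ (p : Ideal R) (hp : p.IsPrime),
      haveI := hp
      HasFiniteInjDim (Localization.AtPrime p) (Localization.AtPrime p) := by
  obtain ⟨hproj, hfaith, hIG⟩ := hGor
  intro p hp
  haveI := hp
  haveI := hproj
  haveI := hfaith
  obtain ⟨⟨d, hd⟩, -⟩ := hIG p hp
  refine ⟨d, fun M i hi => ?_⟩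
  haveI : Nontrivial (TensorProduct R (Localization.AtPrime p) A) :=
    nontrivial_tensor R (Localization.AtPrime p) A
  haveI hPSB : Module.Projective (Localization.AtPrime p)
      (TensorProduct R (Localization.AtPrime p) A) := inferInstance
  obtain ⟨imap, rmap, hir⟩ :=
    exists_retract (Localization.AtPrime p) (TensorProduct R (Localization.AtPrime p) A)
  have hsub : Subsingleton (((Ext ℤ (ModuleCat.{0} (Localization.AtPrime p)) i).obj
      (Opposite.op M)).obj (ModuleCat.of (Localization.AtPrime p)
        (TensorProduct R (Localization.AtPrime p) A))) := by
    refine subsingleton_of_moduleCat_iso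
      (extIsoChange (Localization.AtPrime p) (TensorProduct R (Localization.AtPrime p) A) i
        (CategoryTheory.ProjectiveResolution.of M)) ?_
    exact hd ((tensF (Localization.AtPrime p) (TensorProduct R (Localization.AtPrime p) A)).obj M)
      i hi
  have hcomp : (ModuleCat.ofHom imap) ≫ (ModuleCat.ofHom rmap) =
      𝟙 (ModuleCat.of (Localization.AtPrime p) (Localization.AtPrime p)) := by
    apply ModuleCat.hom_ext
    apply LinearMap.ext
    intro s
    exact DFunLike.congr_fun hir s
  exact ext_retract (ModuleCat.ofHom imap) (ModuleCat.ofHom rmap) hcomp i hsub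


end
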